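/- Let f : ℝ^p → ℝ be twice continuously differentiable with ∇²f(θ) ⪰ m·I for all θ (where m > 0) and with L-Lipschitz Hessian, and let θ* be its global minimizer. Fix κ₁ ∈ (0, 1/2) and set η = (m²/(8L))·min{3(1 − 2κ₁), 2}. Let γ_g, γ_h ≥ 0 satisfy γ_g ≤ η and γ_h ≤ m/2, and let (θ_t)_{t≥0} be a sequence satisfying θ_{t+1} = θ_t − H(θ_t)⁻¹ g(θ_t) for every t, where for every t the maps g and H satisfy ‖g(θ_t) − ∇f(θ_t)‖₂ ≤ γ_g and ‖H(θ_t) − ∇²f(θ_t)‖₂ ≤ γ_h. Define c₂ = η·(4γ_g L/m² + 2γ_h/m) + 2Lγ_g²/m² + γ_g + 2γ_g γ_h/m and suppose c₂ ≤ min{η/2, m²/(24L)}. If ‖∇f(θ₀)‖₂ < η, then for every t ≥ 1 one has ‖∇f(θ_t)‖₂ < η and ‖θ_t − θ*‖₂ ≤ (m/L)·(1/2)^{2^t} + 6c₂/m. -/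

import Mathlib

open scoped RealInnerProductSpace

/-- The Hessian of `f`, as the Fréchet derivative of the gradient. -/
noncomputable def hessianOf {p : ℕ} (f : EuclideanSpace ℝ (Fin p) → ℝ)
    (θ : EuclideanSpace ℝ (Fin p)) :
    EuclideanSpace ℝ (Fin p) →L[ℝ] EuclideanSpace ℝ (Fin p) :=
  fderiv ℝ (gradient f) θ

open InnerProductSpace Set

theorem grad_diff {p : ℕ} (f : EuclideanSpace ℝ (Fin p) → ℝ) (hf : ContDiff ℝ 2 f) :
    Differentiable ℝ (gradient f) := by
  have h1 : ContDiff ℝ 1 (fderiv ℝ f) := hf.fderiv_right (by norm_num)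
  exact fun x => ((toDual ℝ (EuclideanSpace ℝ (Fin p))).symm.toContinuousLinearEquiv.differentiable.comp
    (h1.differentiable (by norm_num))) x

theorem grad_hasFDerivAt {p : ℕ} (f : EuclideanSpace ℝ (Fin p) → ℝ) (hf : ContDiff ℝ 2 f)
    (x : EuclideanSpace ℝ (Fin p)) : HasFDerivAt (gradient f) (hessianOf f x) x :=
  (grad_diff f hf x).hasFDerivAt

theorem grad_line_hasDerivAt {p : ℕ} (f : EuclideanSpace ℝ (Fin p) → ℝ) (hf : ContDiff ℝ 2 f)
    (x v : EuclideanSpace ℝ (Fin p)) (s : ℝ) :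
    HasDerivAt (fun s : ℝ => gradient f (x + s • v)) (hessianOf f (x + s • v) v) s := by
  have h1 : HasDerivAt (fun s : ℝ => x + s • v) v s := by
    simpa using ((hasDerivAt_id s).smul_const v).const_add x
  exact (grad_hasFDerivAt f hf (x + s • v)).comp_hasDerivAt s h1

theorem grad_taylor {p : ℕ} (f : EuclideanSpace ℝ (Fin p) → ℝ) (L : ℝ)
    (hf : ContDiff ℝ 2 f)
    (hlip : ∀ θ₁ θ₂ : EuclideanSpace ℝ (Fin p),
      ‖hessianOf f θ₁ - hessianOf f θ₂‖ ≤ L * ‖θ₁ - θ₂‖)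
    (x v : EuclideanSpace ℝ (Fin p)) :
    ‖gradient f (x + v) - gradient f x - hessianOf f x v‖ ≤ L / 2 * ‖v‖ ^ 2 := by
  set φ : ℝ → EuclideanSpace ℝ (Fin p) :=
    fun s => gradient f (x + s • v) - gradient f x - s • (hessianOf f x v) with hφdef
  set φ' : ℝ → EuclideanSpace ℝ (Fin p) :=
    fun s => hessianOf f (x + s • v) v - hessianOf f x v with hφ'def
  have hφ : ∀ s : ℝ, HasDerivAt φ (φ' s) s := by
    intro s
    have := ((grad_line_hasDerivAt f hf x v s).sub_const (gradient f x)).sub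
      ((hasDerivAt_id s).smul_const (hessianOf f x v))
    simp only [one_smul] at this
    exact this
  have key := image_norm_le_of_norm_deriv_right_le_deriv_boundary
    (f := φ) (f' := φ') (a := 0) (b := 1)
    (fun s _ => (hφ s).continuousAt.continuousWithinAt)
    (fun s _ => (hφ s).hasDerivWithinAt)
    (B := fun s => L * ‖v‖ ^ 2 * (s ^ 2 / 2)) (B' := fun s => L * ‖v‖ ^ 2 * s)
    (by simp [hφdef])
    (by
      intro s
      have : HasDerivAt (fun s : ℝ => s ^ 2 / 2) s s := by
        simpa using (hasDerivAt_pow 2 s).div_const 2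
      simpa using this.const_mul (L * ‖v‖ ^ 2))
    (by
      intro s hs
      have h1 : ‖φ' s‖ ≤ ‖hessianOf f (x + s • v) - hessianOf f x‖ * ‖v‖ := by
        have := (hessianOf f (x + s • v) - hessianOf f x).le_opNorm v
        rw [ContinuousLinearMap.sub_apply] at this
        exact this
      have h2 : ‖hessianOf f (x + s • v) - hessianOf f x‖ ≤ L * (s * ‖v‖) := by
        have h3 := hlip (x + s • v) x
        have h4 : ‖x + s • v - x‖ = s * ‖v‖ := by
          rw [add_sub_cancel_left, norm_smul, Real.norm_eq_abs, abs_of_nonneg hs.1]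
        rw [h4] at h3
        exact h3
      have hv : (0:ℝ) ≤ ‖v‖ := norm_nonneg _
      calc ‖φ' s‖ ≤ (L * (s * ‖v‖)) * ‖v‖ := h1.trans (by nlinarith)
        _ = L * ‖v‖ ^ 2 * s := by ring)
  have h5 := key (x := 1) (by norm_num)
  have h6 : φ 1 = gradient f (x + v) - gradient f x - hessianOf f x v := by
    simp [hφdef]
  rw [h6] at h5
  calc ‖gradient f (x + v) - gradient f x - hessianOf f x v‖
      ≤ L * ‖v‖ ^ 2 * (1 ^ 2 / 2) := h5
    _ = L / 2 * ‖v‖ ^ 2 := by ring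
theorem grad_mono {p : ℕ} (f : EuclideanSpace ℝ (Fin p) → ℝ) (m : ℝ) (hf : ContDiff ℝ 2 f)
    (hconv : ∀ θ v : EuclideanSpace ℝ (Fin p), m * ‖v‖ ^ 2 ≤ ⟪hessianOf f θ v, v⟫)
    (x y : EuclideanSpace ℝ (Fin p)) :
    m * ‖y - x‖ ^ 2 ≤ ⟪gradient f y - gradient f x, y - x⟫ := by
  set d := y - x with hd
  set ψ : ℝ → ℝ := fun s => ⟪gradient f (x + s • d), d⟫ with hψ
  have hder : ∀ s : ℝ, HasDerivAt ψ (⟪hessianOf f (x + s • d) d, d⟫) s := by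
    intro s
    have h1 := grad_line_hasDerivAt f hf x d s
    have h2 := h1.inner ℝ (hasDerivAt_const s d)
    simp only [inner_zero_right, zero_add, add_zero] at h2
    exact h2
  obtain ⟨c, _, hc⟩ := exists_hasDerivAt_eq_slope (a := (0:ℝ)) (b := 1) ψ
    (fun s => ⟪hessianOf f (x + s • d) d, d⟫) (by norm_num)
    (fun s _ => (hder s).continuousAt.continuousWithinAt)
    (fun s _ => hder s)
  have h3 : ψ 1 - ψ 0 = ⟪hessianOf f (x + c • d) d, d⟫ := by
    rw [hc]; ring
  have h4 : ψ 1 = ⟪gradient f y, d⟫ := by simp [hψ, hd]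
  have h5 : ψ 0 = ⟪gradient f x, d⟫ := by simp [hψ]
  have h6 := hconv (x + c • d) d
  have : ⟪gradient f y, d⟫ - ⟪gradient f x, d⟫ ≥ m * ‖d‖ ^ 2 := by
    rw [← h4, ← h5, h3]; exact h6
  rw [inner_sub_left]
  linarith

theorem grad_min_zero {p : ℕ} (f : EuclideanSpace ℝ (Fin p) → ℝ) (hf : ContDiff ℝ 2 f)
    (θstar : EuclideanSpace ℝ (Fin p)) (hmin : ∀ θ', f θstar ≤ f θ') :
    gradient f θstar = 0 := by
  have h1 : IsLocalMin f θstar := Filter.Eventually.of_forall hmin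
  have h2 : fderiv ℝ f θstar = 0 := h1.fderiv_eq_zero
  show (toDual ℝ (EuclideanSpace ℝ (Fin p))).symm (fderiv ℝ f θstar) = 0
  rw [h2]; simp

theorem dist_le_grad {p : ℕ} (f : EuclideanSpace ℝ (Fin p) → ℝ) (m : ℝ) (hm : 0 < m)
    (hf : ContDiff ℝ 2 f)
    (hconv : ∀ θ v : EuclideanSpace ℝ (Fin p), m * ‖v‖ ^ 2 ≤ ⟪hessianOf f θ v, v⟫)
    (θstar : EuclideanSpace ℝ (Fin p)) (hmin : ∀ θ', f θstar ≤ f θ')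
    (x : EuclideanSpace ℝ (Fin p)) :
    ‖x - θstar‖ ≤ ‖gradient f x‖ / m := by
  have h1 := grad_mono f m hf hconv θstar x
  rw [grad_min_zero f hf θstar hmin, sub_zero] at h1
  have h2 : ⟪gradient f x, x - θstar⟫ ≤ ‖gradient f x‖ * ‖x - θstar‖ :=
    real_inner_le_norm _ _
  rcases eq_or_lt_of_le (norm_nonneg (x - θstar)) with h | h
  · rw [← h]; positivity
  · rw [div_eq_inv_mul, ← mul_le_mul_iff_right₀ hm, ← mul_assoc, mul_inv_cancel₀ hm.ne', one_mul]
    have := h1.trans h2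
    nlinarith
theorem inverse_facts {p : ℕ} (A : EuclideanSpace ℝ (Fin p) →L[ℝ] EuclideanSpace ℝ (Fin p))
    (c : ℝ) (hc : 0 < c)
    (hcoer : ∀ v, c * ‖v‖ ^ 2 ≤ ⟪A v, v⟫) :
    (∀ u, A (A.inverse u) = u) ∧ ∀ u, ‖A.inverse u‖ ≤ ‖u‖ / c := by
  have hlow : ∀ v, c * ‖v‖ ≤ ‖A v‖ := by
    intro v
    rcases eq_or_lt_of_le (norm_nonneg v) with h | h
    · rw [← h]; simp
    · have h1 := hcoer v
      have h2 : ⟪A v, v⟫ ≤ ‖A v‖ * ‖v‖ := real_inner_le_norm _ _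
      nlinarith
  have hinj : Function.Injective A := by
    intro a b hab
    have h1 : A (a - b) = 0 := by rw [map_sub, hab, sub_self]
    have h2 := hlow (a - b)
    rw [h1, norm_zero] at h2
    have : ‖a - b‖ ≤ 0 := by nlinarith [norm_nonneg (a - b)]
    rwa [← sub_eq_zero, ← norm_le_zero_iff]
  have hbij : Function.Bijective A :=
    ⟨hinj, (LinearMap.injective_iff_surjective (f := A.toLinearMap)).mp hinj⟩
  set e : EuclideanSpace ℝ (Fin p) ≃L[ℝ] EuclideanSpace ℝ (Fin p) :=
    (LinearEquiv.ofBijective A.toLinearMap hbij).toContinuousLinearEquiv with he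
  have hcoe : (e : EuclideanSpace ℝ (Fin p) →L[ℝ] EuclideanSpace ℝ (Fin p)) = A := by
    ext v; rfl
  have hinv : A.inverse = (e.symm : EuclideanSpace ℝ (Fin p) →L[ℝ] EuclideanSpace ℝ (Fin p)) := by
    rw [← hcoe, ContinuousLinearMap.inverse_equiv]
  have hAeq : ∀ u, A (A.inverse u) = u := by
    intro u
    rw [hinv]
    show A (e.symm u) = u
    conv_lhs => rw [← hcoe]
    exact e.apply_symm_apply u
  refine ⟨hAeq, fun u => ?_⟩
  have h2 := hlow (A.inverse u)
  rw [hAeq u] at h2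
  rw [le_div_iff₀ hc]
  linarith

theorem newton_step {p : ℕ} (f : EuclideanSpace ℝ (Fin p) → ℝ) (m L γg γh : ℝ)
    (hm : 0 < m) (hL : 0 < L) (hγg0 : 0 ≤ γg) (hγh0 : 0 ≤ γh) (hγhm : γh ≤ m / 2)
    (hf : ContDiff ℝ 2 f)
    (hconv : ∀ θ v : EuclideanSpace ℝ (Fin p), m * ‖v‖ ^ 2 ≤ ⟪hessianOf f θ v, v⟫)
    (hlip : ∀ θ₁ θ₂ : EuclideanSpace ℝ (Fin p),
      ‖hessianOf f θ₁ - hessianOf f θ₂‖ ≤ L * ‖θ₁ - θ₂‖)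
    (x gx : EuclideanSpace ℝ (Fin p))
    (Hx : EuclideanSpace ℝ (Fin p) →L[ℝ] EuclideanSpace ℝ (Fin p))
    (hgx : ‖gx - gradient f x‖ ≤ γg) (hHx : ‖Hx - hessianOf f x‖ ≤ γh) :
    m ^ 2 * ‖gradient f (x - Hx.inverse gx)‖ ≤
      m ^ 2 * γg + 2 * m * γh * (‖gradient f x‖ + γg)
        + 2 * L * (‖gradient f x‖ + γg) ^ 2 := by
  -- coercivity of Hx
  have coer : ∀ v, m / 2 * ‖v‖ ^ 2 ≤ ⟪Hx v, v⟫ := by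
    intro v
    have e1 : ⟪Hx v, v⟫ = ⟪hessianOf f x v, v⟫ + ⟪(Hx - hessianOf f x) v, v⟫ := by
      rw [ContinuousLinearMap.sub_apply, inner_sub_left]; ring
    have e2 : |⟪(Hx - hessianOf f x) v, v⟫| ≤ γh * ‖v‖ ^ 2 := by
      have h1 := abs_real_inner_le_norm ((Hx - hessianOf f x) v) v
      have h2 := (Hx - hessianOf f x).le_opNorm v
      have h3 : ‖(Hx - hessianOf f x) v‖ * ‖v‖ ≤ γh * ‖v‖ ^ 2 := by
        nlinarith [norm_nonneg ((Hx - hessianOf f x) v), norm_nonneg v,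
          norm_nonneg (Hx - hessianOf f x)]
      linarith
    have h4 := hconv x v
    have h5 := abs_le.mp e2
    have hv2 : (0:ℝ) ≤ ‖v‖ ^ 2 := by positivity
    nlinarith
  obtain ⟨hApp, hBnd⟩ := inverse_facts Hx (m / 2) (half_pos hm) coer
  set w := Hx.inverse gx with hw
  have hwn : m * ‖w‖ ≤ 2 * ‖gx‖ := by
    have := hBnd gx
    rw [div_div_eq_mul_div] at this
    rw [le_div_iff₀ (by positivity : (0:ℝ) < m)] at this
    linarith
  have hgxn : ‖gx‖ ≤ ‖gradient f x‖ + γg := by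
    have := norm_add_le (gx - gradient f x) (gradient f x)
    simp only [sub_add_cancel] at this
    linarith
  -- Taylor
  have htay : ‖gradient f (x - w) - gradient f x - hessianOf f x (-w)‖ ≤ L / 2 * ‖w‖ ^ 2 := by
    have := grad_taylor f L hf hlip x (-w)
    rw [← sub_eq_add_neg] at this
    simpa using this
  -- decomposition
  have hid : gradient f (x - w) =
      (gradient f (x - w) - gradient f x - hessianOf f x (-w))
        + (gradient f x - gx) + ((Hx - hessianOf f x) w) := by
    have hHw : Hx w = gx := hApp gx
    rw [ContinuousLinearMap.sub_apply, hHw, map_neg]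
    abel
  have hnorm : ‖gradient f (x - w)‖ ≤ L / 2 * ‖w‖ ^ 2 + γg + γh * ‖w‖ := by
    rw [hid]
    have t1 := norm_add_le ((gradient f (x - w) - gradient f x - hessianOf f x (-w))
      + (gradient f x - gx)) ((Hx - hessianOf f x) w)
    have t2 := norm_add_le (gradient f (x - w) - gradient f x - hessianOf f x (-w))
      (gradient f x - gx)
    have t3 : ‖gradient f x - gx‖ ≤ γg := by rw [norm_sub_rev]; exact hgx
    have t4 : ‖(Hx - hessianOf f x) w‖ ≤ γh * ‖w‖ := by
      have h2 := (Hx - hessianOf f x).le_opNorm w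
      nlinarith [norm_nonneg w]
    linarith
  -- combine
  have hmw : m * ‖w‖ ≤ 2 * (‖gradient f x‖ + γg) := by linarith
  have hmw0 : 0 ≤ m * ‖w‖ := by positivity
  have hsq : (m * ‖w‖) ^ 2 ≤ (2 * (‖gradient f x‖ + γg)) ^ 2 := by nlinarith
  have hGg0 : (0:ℝ) ≤ ‖gradient f x‖ + γg := by positivity
  nlinarith [hnorm, mul_le_mul_of_nonneg_left hmw hγh0, sq_nonneg (m * ‖w‖),
    mul_pos hm hm, norm_nonneg (gradient f (x - w)), norm_nonneg w]

set_option maxHeartbeats 2000000 in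
/-- pure Newton phase of robust Newton's method — unit steps keep the
gradient small and the iterates converge quadratically to a ball around `θ*`. -/
theorem robust_newton_pure_phase {p : ℕ} (f : EuclideanSpace ℝ (Fin p) → ℝ)
    (m L κ₁ η γg γh c₂ : ℝ) (hm : 0 < m) (hL : 0 < L)
    (hκ₁ : κ₁ ∈ Set.Ioo (0 : ℝ) (1 / 2))
    (hf : ContDiff ℝ 2 f)
    (hconv : ∀ θ v : EuclideanSpace ℝ (Fin p), m * ‖v‖ ^ 2 ≤ ⟪hessianOf f θ v, v⟫)
    (hlip : ∀ θ₁ θ₂ : EuclideanSpace ℝ (Fin p),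
      ‖hessianOf f θ₁ - hessianOf f θ₂‖ ≤ L * ‖θ₁ - θ₂‖)
    (θstar : EuclideanSpace ℝ (Fin p)) (hmin : ∀ θ', f θstar ≤ f θ')
    (hη : η = m ^ 2 / (8 * L) * min (3 * (1 - 2 * κ₁)) 2)
    (hγg0 : 0 ≤ γg) (hγh0 : 0 ≤ γh) (hγgη : γg ≤ η) (hγhm : γh ≤ m / 2)
    (g : EuclideanSpace ℝ (Fin p) → EuclideanSpace ℝ (Fin p))
    (H : EuclideanSpace ℝ (Fin p) →
      EuclideanSpace ℝ (Fin p) →L[ℝ] EuclideanSpace ℝ (Fin p))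
    (θ : ℕ → EuclideanSpace ℝ (Fin p))
    (hupd : ∀ t, θ (t + 1) = θ t - (H (θ t)).inverse (g (θ t)))
    (hg : ∀ t, ‖g (θ t) - gradient f (θ t)‖ ≤ γg)
    (hH : ∀ t, ‖H (θ t) - hessianOf f (θ t)‖ ≤ γh)
    (hc₂ : c₂ = η * (4 * γg * L / m ^ 2 + 2 * γh / m) + 2 * L * γg ^ 2 / m ^ 2
      + γg + 2 * γg * γh / m)
    (hc₂small : c₂ ≤ min (η / 2) (m ^ 2 / (24 * L)))
    (h0 : ‖gradient f (θ 0)‖ < η) :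
    ∀ t : ℕ, 1 ≤ t → ‖gradient f (θ t)‖ < η ∧
      ‖θ t - θstar‖ ≤ m / L * (1 / 2 : ℝ) ^ 2 ^ t + 6 * c₂ / m := by
  set G : ℕ → ℝ := fun t => ‖gradient f (θ t)‖ with hGdef
  have hG0 : ∀ t, 0 ≤ G t := fun t => norm_nonneg _
  have hη0 : 0 < η := by
    rw [hη]
    apply mul_pos (by positivity)
    exact lt_min (by nlinarith [hκ₁.2]) (by norm_num)
  have hη4 : 4 * L * η ≤ m ^ 2 := by
    have h1 : η ≤ m ^ 2 / (8 * L) * 2 := by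
      rw [hη]; exact mul_le_mul_of_nonneg_left (min_le_right _ _) (by positivity)
    have e : m ^ 2 / (8 * L) * 2 * (4 * L) = m ^ 2 := by field_simp; ring
    nlinarith [hL]
  have hc₂0 : 0 ≤ c₂ := by
    rw [hc₂]
    have d1 : (0:ℝ) ≤ 4 * γg * L / m ^ 2 :=
      div_nonneg (by nlinarith [mul_nonneg hγg0 hL.le]) (by positivity)
    have d2 : (0:ℝ) ≤ 2 * γh / m := div_nonneg (by linarith) hm.le
    have d3 : (0:ℝ) ≤ 2 * L * γg ^ 2 / m ^ 2 :=
      div_nonneg (by nlinarith [sq_nonneg γg]) (by positivity)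
    have d4 : (0:ℝ) ≤ 2 * γg * γh / m :=
      div_nonneg (by nlinarith [mul_nonneg hγg0 hγh0]) hm.le
    have d5 := mul_nonneg hη0.le (add_nonneg d1 d2)
    linarith
  have hc2η : 2 * c₂ ≤ η := by
    have := hc₂small.trans (min_le_left _ _)
    linarith
  have c24 : 24 * L * c₂ ≤ m ^ 2 := by
    have h1 := hc₂small.trans (min_le_right _ _)
    rw [le_div_iff₀ (by positivity)] at h1
    linarith
  have hm2c2 : m ^ 2 * c₂ = η * (4 * γg * L) + η * (2 * γh * m) + 2 * L * γg ^ 2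
      + m ^ 2 * γg + 2 * γg * γh * m := by
    rw [hc₂]; field_simp
  have hstep : ∀ t, m ^ 2 * G (t + 1) ≤
      m ^ 2 * γg + 2 * m * γh * (G t + γg) + 2 * L * (G t + γg) ^ 2 := by
    intro t
    have h := newton_step f m L γg γh hm hL hγg0 hγh0 hγhm hf hconv hlip
      (θ t) (g (θ t)) (H (θ t)) (hg t) (hH t)
    rw [← hupd t] at h
    exact h
  have hrec : ∀ t, G t ≤ η → m ^ 2 * G (t + 1) ≤ 2 * L * (G t) ^ 2 + m ^ 2 * c₂ := by
    intro t hGt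
    have h := hstep t
    have hco : (0:ℝ) ≤ 4 * L * γg + 2 * m * γh := by
      nlinarith [mul_nonneg hL.le hγg0, mul_nonneg hm.le hγh0]
    nlinarith [mul_nonneg (sub_nonneg.mpr hGt) hco, hm2c2]
  have inv : ∀ t, G t < η := by
    intro t
    induction t with
    | zero => exact h0
    | succ n ih =>
      have h := hrec n ih.le
      have hsq : (G n) ^ 2 < η ^ 2 := by nlinarith [hG0 n]
      nlinarith [mul_pos hm hm, mul_pos hL hη0, hη4, hc2η,
        mul_pos (mul_pos hL hη0) hη0]
  have S1 : 8 * L * G 1 ≤ m ^ 2 + 8 * L * c₂ := by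
    have h := hrec 0 (inv 0).le
    have h40 : 4 * L * G 0 ≤ m ^ 2 := by nlinarith [inv 0, hL, hG0 0]
    have hsq0 : (4 * L * G 0) ^ 2 ≤ (m ^ 2) ^ 2 :=
      pow_le_pow_left₀ (by positivity) h40 2
    nlinarith [h, hsq0, mul_pos hm hm, hL.le]
  have R : ∀ t, 2 ≤ t → 2 * L * G t ≤ m ^ 2 * (1 / 2 : ℝ) ^ 2 ^ t + 4 * L * c₂ := by
    intro t ht
    induction t, ht using Nat.le_induction with
    | base =>
      have e16 : ((1:ℝ) / 2) ^ 2 ^ 2 = 1 / 16 := by norm_num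
      rw [e16]
      have h := hrec 1 (inv 1).le
      have hsq1 : (8 * L * G 1) ^ 2 ≤ (m ^ 2 + 8 * L * c₂) ^ 2 :=
        pow_le_pow_left₀ (by positivity) S1 2
      have hcc : 64 * L ^ 2 * c₂ ^ 2 ≤ (8 / 3) * L * m ^ 2 * c₂ := by
        nlinarith [mul_nonneg (mul_nonneg hL.le hc₂0) (sub_nonneg.mpr c24)]
      nlinarith [h, hsq1, hcc, mul_pos hm hm, hL.le,
        mul_nonneg hL.le hc₂0, mul_nonneg (mul_nonneg hm.le hm.le) hc₂0]
    | succ n hn ihn =>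
      set x := ((1:ℝ) / 2) ^ 2 ^ n with hxdef
      have hxpow : ((1:ℝ) / 2) ^ 2 ^ (n + 1) = x ^ 2 := by
        rw [pow_succ, pow_mul]
      have hx0 : 0 < x := by positivity
      have hx16 : x ≤ 1 / 16 := by
        have h1 : (4:ℕ) ≤ 2 ^ n :=
          le_trans (by norm_num) (Nat.pow_le_pow_right (by norm_num) hn)
        calc x ≤ ((1:ℝ) / 2) ^ 4 := pow_le_pow_of_le_one (by norm_num) (by norm_num) h1
          _ = 1 / 16 := by norm_num
      rw [hxpow]
      have h := hrec n (inv n).le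
      have hsqn : (2 * L * G n) ^ 2 ≤ (m ^ 2 * x + 4 * L * c₂) ^ 2 :=
        pow_le_pow_left₀ (by positivity) ihn 2
      have hxc : 8 * L * m ^ 2 * c₂ * x ≤ (1 / 2) * L * m ^ 2 * c₂ := by
        nlinarith [mul_nonneg (mul_nonneg (mul_nonneg hL.le
          (mul_nonneg hm.le hm.le)) hc₂0) (sub_nonneg.mpr hx16)]
      have hcc : 16 * L ^ 2 * c₂ ^ 2 ≤ (2 / 3) * L * m ^ 2 * c₂ := by
        nlinarith [mul_nonneg (mul_nonneg hL.le hc₂0) (sub_nonneg.mpr c24)]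
      nlinarith [h, hsqn, hxc, hcc, mul_pos hm hm, hL.le]
  intro t ht
  refine ⟨inv t, ?_⟩
  have hd : ‖θ t - θstar‖ ≤ G t / m :=
    dist_le_grad f m hm hf hconv θstar hmin (θ t)
  set x := ((1:ℝ) / 2) ^ 2 ^ t with hxdef
  have hx0 : 0 < x := by positivity
  have hGt : G t ≤ m ^ 2 / L * x + 6 * c₂ := by
    have eL : L * (m ^ 2 / L * x) = m ^ 2 * x := by field_simp
    rcases eq_or_lt_of_le ht with h1 | h2
    · have e4 : x = 1 / 4 := by rw [hxdef, ← h1]; norm_num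
      rw [e4] at eL ⊢
      rw [← h1]
      nlinarith [S1, hL, mul_nonneg hL.le hc₂0, eL]
    · have hR := R t h2
      nlinarith [hR, hL, eL, mul_nonneg (mul_nonneg hm.le hm.le) hx0.le,
        mul_nonneg hL.le hc₂0]
  have e : m / L * x + 6 * c₂ / m = (m ^ 2 / L * x + 6 * c₂) / m := by
    field_simp
  rw [e]
  exact hd.trans (by gcongr)
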